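/- Let H be a Hopf algebra over a field k. Define A : H → H ⊗ H by A(h) = Σ S(h₍₁₎) ⊗ h₍₂₎ − ε(h) 1 ⊗ 1. Then A is a gauge field (A(h) ∈ ker(m) for all h, and A(1) = 0) and it has zero curvature, i.e. it satisfies the Maurer–Cartan equation: for all h ∈ H, d(A(h)) + Σ A(h₍₁₎) ∧ A(h₍₂₎) = 0 in H ⊗ H ⊗ H. -/

import Mathlib

open TensorProduct

noncomputable section

variable {k H : Type*} [Field k] [Ring H] [HopfAlgebra k H]

/-- The exterior differential on universal 1-forms:
`d(a ⊗ b) = 1 ⊗ a ⊗ b − a ⊗ 1 ⊗ b + a ⊗ b ⊗ 1`. -/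
noncomputable def dOne : H ⊗[k] H →ₗ[k] H ⊗[k] (H ⊗[k] H) :=
  TensorProduct.mk k H (H ⊗[k] H) 1
    - LinearMap.lTensor H (TensorProduct.mk k H H 1)
    + LinearMap.lTensor H ((TensorProduct.mk k H H).flip 1)

/-- The wedge product of universal 1-forms: `(a ⊗ b) ∧ (c ⊗ d) = a ⊗ bc ⊗ d`. -/
noncomputable def wedge :
    (H ⊗[k] H) ⊗[k] (H ⊗[k] H) →ₗ[k] H ⊗[k] (H ⊗[k] H) :=
  LinearMap.lTensor H
      ((LinearMap.mul' k H).rTensor H ∘ₗ (TensorProduct.assoc k H H H).symm.toLinearMap)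
    ∘ₗ (TensorProduct.assoc k H H (H ⊗[k] H)).toLinearMap

/-- The gauge field `A(h) = Σ S(h₍₁₎) ⊗ h₍₂₎ − ε(h) 1 ⊗ 1`. -/
noncomputable def gaugeA : H →ₗ[k] H ⊗[k] H :=
  (HopfAlgebra.antipode (R := k) (A := H)).rTensor H ∘ₗ Coalgebra.comul
    - (Coalgebra.counit (R := k) (A := H)).smulRight ((1 : H) ⊗ₜ[k] (1 : H))

namespace St5Aux

/-- `β h = Σ S(h₁) ⊗ h₂`. -/
noncomputable def bb : H →ₗ[k] H ⊗[k] H :=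
  (HopfAlgebra.antipode (R := k) (A := H)).rTensor H ∘ₗ Coalgebra.comul

/-- `γ h = ε(h) • (1 ⊗ 1)`. -/
noncomputable def gg : H →ₗ[k] H ⊗[k] H :=
  (Coalgebra.counit (R := k) (A := H)).smulRight ((1 : H) ⊗ₜ[k] (1 : H))

noncomputable def ll : k →ₗ[k] H ⊗[k] H :=
  LinearMap.toSpanSingleton k (H ⊗[k] H) ((1 : H) ⊗ₜ[k] (1 : H))

lemma gg_eq : gg (k := k) (H := H) = ll ∘ₗ Coalgebra.counit := by
  apply LinearMap.ext; intro h
  simp [gg, ll]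

lemma wedge_tmul (a b c d : H) :
    wedge ((a ⊗ₜ[k] b) ⊗ₜ[k] (c ⊗ₜ[k] d)) = a ⊗ₜ[k] ((b * c) ⊗ₜ[k] d) := by
  simp [wedge]

lemma wedge_one_left (x : H ⊗[k] H) :
    wedge (((1 : H) ⊗ₜ[k] (1 : H)) ⊗ₜ[k] x) = (1 : H) ⊗ₜ[k] x := by
  induction x using TensorProduct.induction_on with
  | zero => simp
  | tmul c d => simp [wedge_tmul]
  | add x y hx hy => rw [tmul_add, map_add, hx, hy, tmul_add]

lemma wedge_one_right (x : H ⊗[k] H) :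
    wedge (x ⊗ₜ[k] ((1 : H) ⊗ₜ[k] (1 : H)))
      = (LinearMap.lTensor H ((TensorProduct.mk k H H).flip 1)) x := by
  induction x using TensorProduct.induction_on with
  | zero => simp
  | tmul a b => simp [wedge_tmul]
  | add x y hx hy => rw [add_tmul, map_add, hx, hy, map_add]

/-- the map `x ⊗ y ↦ Σ x·S(y₍₁₎) ⊗ y₍₂₎` -/
noncomputable def g : H ⊗[k] H →ₗ[k] H ⊗[k] H :=
  (LinearMap.mul' k H).rTensor H
    ∘ₗ (TensorProduct.assoc k H H H).symm.toLinearMap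
    ∘ₗ LinearMap.lTensor H (bb (k := k) (H := H))

lemma E1 :
    ((LinearMap.mul' k H).rTensor H
      ∘ₗ (TensorProduct.assoc k H H H).symm.toLinearMap
      ∘ₗ LinearMap.lTensor H ((HopfAlgebra.antipode (R := k) (A := H)).rTensor H))
      ∘ₗ (TensorProduct.assoc k H H H).toLinearMap
    = (LinearMap.mul' k H ∘ₗ (HopfAlgebra.antipode (R := k) (A := H)).lTensor H).rTensor H := by
  ext a b c
  simp

/-- `Σ h₍₁₎ S(h₍₂₎) ⊗ h₍₃₎ = 1 ⊗ h`. -/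
lemma g_comp_comul :
    g (k := k) (H := H) ∘ₗ Coalgebra.comul = TensorProduct.mk k H H 1 := by
  apply LinearMap.ext; intro h
  simp only [g, LinearMap.comp_apply, LinearEquiv.coe_coe]
  rw [bb, LinearMap.lTensor_comp, LinearMap.comp_apply, ← Coalgebra.coassoc_apply]
  have e1 := LinearMap.congr_fun (E1 (k := k) (H := H))
    ((Coalgebra.comul (R := k) (A := H)).rTensor H (Coalgebra.comul h))
  simp only [LinearMap.comp_apply, LinearEquiv.coe_coe] at e1
  rw [e1, ← LinearMap.rTensor_comp_apply, LinearMap.comp_assoc,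
    HopfAlgebra.mul_antipode_lTensor_comul]
  simp [LinearMap.rTensor_comp, Coalgebra.rTensor_counit_comul, Algebra.algebraMap_eq_smul_one]

lemma wedge_apply_tmul_left (a b : H) (x : H ⊗[k] H) :
    wedge ((a ⊗ₜ[k] b) ⊗ₜ[k] x)
      = a ⊗ₜ[k] ((LinearMap.mul' k H).rTensor H
          ((TensorProduct.assoc k H H H).symm (b ⊗ₜ[k] x))) := by
  induction x using TensorProduct.induction_on with
  | zero =>
      rw [tmul_zero, tmul_zero, map_zero, (TensorProduct.assoc k H H H).symm.map_zero,
        map_zero, tmul_zero]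
  | tmul c d => simp [wedge]
  | add x y hx hy =>
      rw [tmul_add, tmul_add, map_add, map_add, map_add, hx, hy, tmul_add]

lemma E2 :
    wedge (k := k) (H := H)
        ∘ₗ TensorProduct.map ((HopfAlgebra.antipode (R := k) (A := H)).rTensor H) bb
      = TensorProduct.map (HopfAlgebra.antipode (R := k) (A := H)) g
          ∘ₗ (TensorProduct.assoc k H H H).toLinearMap := by
  ext a b c
  simp [wedge_apply_tmul_left, g]

/-- `Σ A₀(h₍₁₎) ∧ A₀(h₍₂₎) = Σ S(h₍₁₎) ⊗ 1 ⊗ h₍₂₎` where `A₀ = bb`. -/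
lemma wedge_bb_bb (h : H) :
    wedge (TensorProduct.map (bb (k := k) (H := H)) bb (Coalgebra.comul h))
      = TensorProduct.map (HopfAlgebra.antipode (R := k) (A := H))
          (TensorProduct.mk k H H 1) (Coalgebra.comul h) := by
  have h1 := TensorProduct.map_comp ((HopfAlgebra.antipode (R := k) (A := H)).rTensor H)
    (bb (k := k) (H := H)) Coalgebra.comul LinearMap.id
  simp only [LinearMap.comp_id] at h1
  have h1' : TensorProduct.map (bb (k := k) (H := H)) bb
      = TensorProduct.map ((HopfAlgebra.antipode (R := k) (A := H)).rTensor H) bb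
          ∘ₗ (Coalgebra.comul (R := k) (A := H)).rTensor H := h1
  rw [h1', LinearMap.comp_apply, ← LinearMap.comp_apply (f := wedge),
    E2, LinearMap.comp_apply, LinearEquiv.coe_coe, Coalgebra.coassoc_apply,
    ← LinearMap.comp_apply, LinearMap.map_comp_lTensor, g_comp_comul]

lemma cross_bg (h : H) :
    wedge (TensorProduct.map (bb (k := k) (H := H)) gg (Coalgebra.comul h))
      = LinearMap.lTensor H ((TensorProduct.mk k H H).flip 1) (bb h) := by
  have h1 : TensorProduct.map (bb (k := k) (H := H)) gg
      = TensorProduct.map bb ll ∘ₗ (Coalgebra.counit (R := k) (A := H)).lTensor H := by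
    rw [gg_eq, ← LinearMap.map_comp_lTensor]
  rw [h1, LinearMap.comp_apply, Coalgebra.lTensor_counit_comul, TensorProduct.map_tmul]
  rw [show ll (1 : k) = (1 : H) ⊗ₜ[k] (1 : H) by simp [ll]]
  exact wedge_one_right _

lemma cross_gb (h : H) :
    wedge (TensorProduct.map (gg (k := k) (H := H)) bb (Coalgebra.comul h))
      = (1 : H) ⊗ₜ[k] (bb h) := by
  have h1 : TensorProduct.map (gg (k := k) (H := H)) bb
      = TensorProduct.map ll bb ∘ₗ (Coalgebra.counit (R := k) (A := H)).rTensor H := by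
    rw [gg_eq, ← LinearMap.map_comp_rTensor]
  rw [h1, LinearMap.comp_apply, Coalgebra.rTensor_counit_comul, TensorProduct.map_tmul]
  rw [show ll (1 : k) = (1 : H) ⊗ₜ[k] (1 : H) by simp [ll]]
  exact wedge_one_left _

lemma cross_gg (h : H) :
    wedge (TensorProduct.map (gg (k := k) (H := H)) gg (Coalgebra.comul h))
      = Coalgebra.counit (R := k) h • ((1 : H) ⊗ₜ[k] ((1 : H) ⊗ₜ[k] (1 : H))) := by
  have h1 : TensorProduct.map (gg (k := k) (H := H)) gg
      = TensorProduct.map gg ll ∘ₗ (Coalgebra.counit (R := k) (A := H)).lTensor H := by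
    rw [gg_eq (k := k) (H := H), ← LinearMap.map_comp_lTensor, ← gg_eq]
  rw [h1, LinearMap.comp_apply, Coalgebra.lTensor_counit_comul, TensorProduct.map_tmul]
  rw [show ll (1 : k) = (1 : H) ⊗ₜ[k] (1 : H) by simp [ll],
    show gg h = Coalgebra.counit (R := k) h • ((1 : H) ⊗ₜ[k] (1 : H)) from rfl]
  rw [smul_tmul, tmul_smul, map_smul, wedge_one_left]

lemma map_expand :
    TensorProduct.map (gaugeA (k := k) (H := H)) gaugeA
      = TensorProduct.map (bb (k := k) (H := H)) (bb (k := k) (H := H))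
        - TensorProduct.map (bb (k := k) (H := H)) (gg (k := k) (H := H))
        - TensorProduct.map (gg (k := k) (H := H)) (bb (k := k) (H := H))
        + TensorProduct.map (gg (k := k) (H := H)) (gg (k := k) (H := H)) := by
  apply TensorProduct.ext'
  intro a b
  have : gaugeA (k := k) (H := H) = bb - gg := rfl
  simp only [this, TensorProduct.map_tmul, LinearMap.sub_apply, LinearMap.add_apply,
    sub_tmul, tmul_sub]
  abel

lemma dOne_apply (x : H ⊗[k] H) :
    dOne x = (1 : H) ⊗ₜ[k] x - LinearMap.lTensor H (TensorProduct.mk k H H 1) x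
      + LinearMap.lTensor H ((TensorProduct.mk k H H).flip 1) x := by
  simp [dOne]

end St5Aux

open St5Aux in
/-- `A(h) = Σ S(h₍₁₎) ⊗ h₍₂₎ − ε(h) 1 ⊗ 1` is a gauge field (`A(h) ∈ ker m`,
`A(1) = 0`) with zero curvature: `d(A(h)) + Σ A(h₍₁₎) ∧ A(h₍₂₎) = 0` for all `h`. -/
theorem statement5 :
    (∀ h : H, LinearMap.mul' k H (gaugeA (k := k) (H := H) h) = 0)
    ∧ gaugeA (k := k) (H := H) 1 = 0
    ∧ (∀ h : H,
        dOne (gaugeA (k := k) (H := H) h)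
          + wedge ((TensorProduct.map gaugeA gaugeA) (Coalgebra.comul (R := k) h)) = 0) := by
  refine ⟨fun h => ?_, ?_, fun h => ?_⟩
  · simp [gaugeA, Algebra.smul_def]
  · have hS : HopfAlgebra.antipode (R := k) (1 : H) = 1 := by
      have := HopfAlgebra.mul_antipode_rTensor_comul_apply (R := k) (A := H) 1
      simpa [Algebra.TensorProduct.one_def] using this
    simp [gaugeA, Algebra.TensorProduct.one_def, hS]
  · have hg : gaugeA (k := k) (H := H) = bb - gg := rfl
    have hbb : TensorProduct.map (HopfAlgebra.antipode (R := k) (A := H))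
        (TensorProduct.mk k H H 1) (Coalgebra.comul h)
        = LinearMap.lTensor H (TensorProduct.mk k H H 1) (bb h) := by
      rw [bb, LinearMap.comp_apply, ← LinearMap.comp_apply
        (f := LinearMap.lTensor H (TensorProduct.mk k H H 1)),
        LinearMap.lTensor_comp_rTensor]
    have dgg : dOne (gg (k := k) (H := H) h)
        = Coalgebra.counit (R := k) h • ((1 : H) ⊗ₜ[k] ((1 : H) ⊗ₜ[k] (1 : H))) := by
      rw [show gg h = Coalgebra.counit (R := k) h • ((1 : H) ⊗ₜ[k] (1 : H)) from rfl,
        map_smul, dOne_apply]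
      simp
    rw [map_expand, hg]
    simp only [LinearMap.sub_apply, LinearMap.add_apply, map_sub, map_add]
    rw [wedge_bb_bb, hbb, cross_bg, cross_gb, cross_gg, dgg, dOne_apply]
    abel
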